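/- Let R = ℤ[s, s⁻¹] and let m, n, p be positive integers. In the free R-module with basis {u, v, w}, the submodule generated by (1−s)(u+v), (1−s)(v+w), (1−s)(u+v+w), (1−s+s²−⋯+s^{2m})u, (1−s+s²−⋯+s^{2n})v, and (1−s+s²−⋯+s^{2p})w equals the whole module. -/
import Mathlib


open LaurentPolynomial

/-- `R = ℤ[s,s⁻¹]`. -/
noncomputable abbrev LZ : Type := LaurentPolynomial ℤ

/-- `s ∈ ℤ[s,s⁻¹]`. -/
noncomputable def sL : LZ := T 1

/-- The alternating sum `1 − s + s² − ⋯ + s^(2m)` (with `2m+1` terms). -/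
noncomputable def altSum (m : ℕ) : LZ := ∑ i ∈ Finset.range (2 * m + 1), (-sL) ^ i

/-- Basis vector `u` of `R³`. -/
noncomputable def uV : Fin 3 → LZ := Pi.single 0 1
/-- Basis vector `v` of `R³`. -/
noncomputable def vV : Fin 3 → LZ := Pi.single 1 1
/-- Basis vector `w` of `R³`. -/
noncomputable def wV : Fin 3 → LZ := Pi.single 2 1

lemma altSum_eq (m : ℕ) :
    altSum m = 1 - (1 - sL) * (∑ k ∈ Finset.range m, sL ^ (2 * k + 1)) := by
  induction m with
  | zero => simp [altSum]
  | succ m ih =>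
      have h : 2 * (m + 1) + 1 = (2 * m + 1) + 1 + 1 := by ring
      rw [altSum, h, Finset.sum_range_succ, Finset.sum_range_succ, ← altSum, ih,
        Finset.sum_range_succ]
      rw [show (2*m+1+1 : ℕ) = 2*(m+1) by ring, Odd.neg_pow ⟨m,by ring⟩, Even.neg_pow ⟨m+1,by ring⟩]
      ring

theorem span_eq_top_general_four_generator (m n p : ℕ) (hm : 0 < m) (hn : 0 < n)
    (hp : 0 < p) :
    Submodule.span LZ
        {(1 - sL) • (uV + vV), (1 - sL) • (vV + wV), (1 - sL) • (uV + vV + wV),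
          altSum m • uV, altSum n • vV, altSum p • wV} = ⊤ := by
  set S := Submodule.span LZ
      {(1 - sL) • (uV + vV), (1 - sL) • (vV + wV), (1 - sL) • (uV + vV + wV),
        altSum m • uV, altSum n • vV, altSum p • wV} with hS
  have g1 : (1 - sL) • (uV + vV) ∈ S := Submodule.subset_span (Set.mem_insert _ _)
  have g2 : (1 - sL) • (vV + wV) ∈ S := Submodule.subset_span (Set.mem_insert_of_mem _ (Set.mem_insert _ _))
  have g3 : (1 - sL) • (uV + vV + wV) ∈ S := Submodule.subset_span (Set.mem_insert_of_mem _ (Set.mem_insert_of_mem _ (Set.mem_insert _ _)))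
  have g4 : altSum m • uV ∈ S := Submodule.subset_span (Set.mem_insert_of_mem _ (Set.mem_insert_of_mem _ (Set.mem_insert_of_mem _ (Set.mem_insert _ _))))
  have g5 : altSum n • vV ∈ S := Submodule.subset_span (Set.mem_insert_of_mem _ (Set.mem_insert_of_mem _ (Set.mem_insert_of_mem _ (Set.mem_insert_of_mem _ (Set.mem_insert _ _)))))
  have g6 : altSum p • wV ∈ S := Submodule.subset_span (Set.mem_insert_of_mem _ (Set.mem_insert_of_mem _ (Set.mem_insert_of_mem _ (Set.mem_insert_of_mem _ (Set.mem_insert_of_mem _ (Set.mem_singleton _))))))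
  have hw : (1 - sL) • wV ∈ S := by
    have : (1 - sL) • wV = (1 - sL) • (uV + vV + wV) - (1 - sL) • (uV + vV) := by
      rw [← smul_sub]; congr 1; abel
    rw [this]; exact sub_mem g3 g1
  have hu : (1 - sL) • uV ∈ S := by
    have : (1 - sL) • uV = (1 - sL) • (uV + vV + wV) - (1 - sL) • (vV + wV) := by
      rw [← smul_sub]; congr 1; abel
    rw [this]; exact sub_mem g3 g2
  have hv : (1 - sL) • vV ∈ S := by
    have : (1 - sL) • vV = (1 - sL) • (uV + vV) - (1 - sL) • uV := by
      rw [← smul_sub]; congr 1; abel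
    rw [this]; exact sub_mem g1 hu
  have key : ∀ (k : ℕ) (x : Fin 3 → LZ), altSum k • x ∈ S → (1 - sL) • x ∈ S → x ∈ S := by
    intro k x h1 h2
    have : x = altSum k • x +
        (∑ i ∈ Finset.range k, sL ^ (2 * i + 1)) • ((1 - sL) • x) := by
      rw [smul_smul, altSum_eq, ← add_smul]
      rw [show (1 - (1 - sL) * ∑ k_1 ∈ Finset.range k, sL ^ (2 * k_1 + 1)) +
        (∑ i ∈ Finset.range k, sL ^ (2 * i + 1)) * (1 - sL) = 1 by ring, one_smul]
    rw [this]
    exact add_mem h1 (Submodule.smul_mem _ _ h2)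
  have hu' : uV ∈ S := key m uV g4 hu
  have hv' : vV ∈ S := key n vV g5 hv
  have hw' : wV ∈ S := key p wV g6 hw
  rw [eq_top_iff]
  rintro x -
  have hx : x = x 0 • uV + x 1 • vV + x 2 • wV := by
    funext i
    fin_cases i <;> simp [uV, vV, wV]
  rw [hx]
  exact add_mem (add_mem (Submodule.smul_mem _ _ hu') (Submodule.smul_mem _ _ hv'))
    (Submodule.smul_mem _ _ hw')
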